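/- For f, g ∈ 𝕋[x_1,…,x_n]: f ∼ g (f and g take the same value at every point of 𝕋^n) if and only if f^e = g^e as polynomials. -/

import Mathlib

/-- The extended tropical semiring `𝕋`: tangible reals `(a, false)`,
ghost reals `(a, true)`, and `none` = `-∞`. -/
def T : Type := Option (ℝ × Bool)

namespace T

/-- The tangible element of value `a`. -/
def tang (a : ℝ) : T := some (a, false)

/-- The ghost element `a^ν` of value `a`. -/
def ghost (a : ℝ) : T := some (a, true)

/-- Tropical addition on `𝕋`. -/
noncomputable def add : T → T → T
  | none, y => y
  | some p, none => some p
  | some (a, s), some (b, t) =>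
      if a < b then some (b, t) else if b < a then some (a, s) else some (a, true)

/-- Tropical multiplication on `𝕋`. -/
noncomputable def mul : T → T → T
  | none, _ => none
  | some _, none => none
  | some (a, s), some (b, t) => some (a + b, s || t)

lemma add_assoc' : ∀ x y z : T, add (add x y) z = add x (add y z) := by
  rintro (_ | ⟨a, s⟩) (_ | ⟨b, t⟩) (_ | ⟨c, u⟩) <;>
    simp only [add, T] <;>
    (try split_ifs) <;>
    simp only [add, T] <;>
    (try split_ifs) <;>
    first
      | rfl
      | (exfalso; linarith)
      | (refine congrArg some ?_; refine Prod.ext ?_ ?_ <;>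
          first | rfl | linarith | simp)

lemma add_comm' : ∀ x y : T, add x y = add y x := by
  rintro (_ | ⟨a, s⟩) (_ | ⟨b, t⟩) <;>
    simp only [add, T] <;>
    (try split_ifs) <;>
    first
      | rfl
      | (exfalso; linarith)
      | (refine congrArg some ?_; refine Prod.ext ?_ ?_ <;>
          first | rfl | linarith | simp)

lemma mul_assoc' : ∀ x y z : T, mul (mul x y) z = mul x (mul y z) := by
  rintro (_ | ⟨a, s⟩) (_ | ⟨b, t⟩) (_ | ⟨c, u⟩) <;>
    simp [mul, add_assoc, Bool.or_assoc] <;> rfl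

lemma mul_comm' : ∀ x y : T, mul x y = mul y x := by
  rintro (_ | ⟨a, s⟩) (_ | ⟨b, t⟩) <;> simp [mul, add_comm, Bool.or_comm] <;> rfl

lemma left_distrib' : ∀ x y z : T, mul x (add y z) = add (mul x y) (mul x z) := by
  rintro (_ | ⟨a, s⟩) (_ | ⟨b, t⟩) (_ | ⟨c, u⟩) <;>
    simp only [add, mul, T] <;>
    (try split_ifs) <;>
    simp only [add, mul, T] <;>
    (try split_ifs) <;>
    first
      | rfl
      | (exfalso; linarith)
      | (refine congrArg some ?_; refine Prod.ext ?_ ?_ <;>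
          first | rfl | linarith | simp)

noncomputable instance : Zero T := ⟨none⟩
noncomputable instance : One T := ⟨some (0, false)⟩
noncomputable instance : Add T := ⟨add⟩
noncomputable instance : Mul T := ⟨mul⟩

noncomputable instance : CommSemiring T where
  add := (· + ·)
  zero := 0
  add_assoc := add_assoc'
  zero_add := fun x => by cases x <;> rfl
  add_zero := fun x => by cases x <;> rfl
  add_comm := add_comm'
  mul := (· * ·)
  one := 1
  mul_assoc := mul_assoc'
  one_mul := fun x => by
    show mul (some (0, false)) x = x
    rcases x with _ | ⟨a, s⟩ <;> simp [mul] <;> rfl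
  mul_one := fun x => by
    show mul x (some (0, false)) = x
    rcases x with _ | ⟨a, s⟩ <;> simp [mul] <;> rfl
  mul_comm := mul_comm'
  zero_mul := fun x => by cases x <;> rfl
  mul_zero := fun x => by cases x <;> rfl
  left_distrib := left_distrib'
  right_distrib := fun x y z => by
    show mul (add x y) z = add (mul x z) (mul y z)
    rw [mul_comm', left_distrib', mul_comm' z x, mul_comm' z y]
  nsmul := nsmulRec

/-- Membership in the ghost part `𝕌̄ = 𝕌 ∪ {-∞}` of `𝕋`. -/
def isGhost : T → Prop
  | none => True
  | some (_, s) => s = true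

/-- Membership in the tangible part `ℝ ∪ {-∞}` of `𝕋`. -/
def isTangible : T → Prop
  | none => True
  | some (_, s) => s = false

/-- The underlying real value (junk value `0` at `-∞`); this is `π` on elements `≠ -∞`. -/
def val : T → ℝ
  | none => 0
  | some (a, _) => a

/-- The ghost map `ν`. -/
def nu : T → T
  | none => none
  | some (a, _) => some (a, true)

end T

namespace T

/-- The model value in the half line `[0,∞)`: `-∞ ↦ 0`, an element of value `a ↦ exp a`. -/
noncomputable def gval : T → ℝ
  | none => 0
  | some (a, _) => Real.exp a

lemma nu_isGhost : ∀ x : T, isGhost (nu x)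
  | none => trivial
  | some (_, _) => rfl

lemma gval_injOn_tang : Set.InjOn gval {x : T | isTangible x} := by
  rintro (_ | ⟨a, s⟩) hx (_ | ⟨b, t⟩) hy h <;>
    simp only [gval, Set.mem_setOf_eq, isTangible] at hx hy h
  · rfl
  · exact absurd h.symm (Real.exp_pos b).ne'
  · exact absurd h (Real.exp_pos a).ne'
  · rw [Real.exp_eq_exp] at h; subst hx; subst hy; subst h; rfl

lemma gval_injOn_ghost : Set.InjOn gval {x : T | isGhost x} := by
  rintro (_ | ⟨a, s⟩) hx (_ | ⟨b, t⟩) hy h <;>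
    simp only [gval, Set.mem_setOf_eq, isGhost] at hx hy h
  · rfl
  · exact absurd h.symm (Real.exp_pos b).ne'
  · exact absurd h (Real.exp_pos a).ne'
  · rw [Real.exp_eq_exp] at h; subst hx; subst hy; subst h; rfl

lemma gval_image_tang : gval '' {x : T | isTangible x} = Set.Ici 0 := by
  ext y
  constructor
  · rintro ⟨(_ | ⟨a, s⟩), hx, rfl⟩
    · exact Set.self_mem_Ici
    · exact le_of_lt (by simpa [gval] using Real.exp_pos a)
  · intro hy
    rcases eq_or_lt_of_le (Set.mem_Ici.mp hy : (0 : ℝ) ≤ y) with h | h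
    · exact ⟨none, trivial, h⟩
    · exact ⟨some (Real.log y, false), rfl, by simp [gval, Real.exp_log h]⟩

lemma gval_image_ghost : gval '' {x : T | isGhost x} = Set.Ici 0 := by
  ext y
  constructor
  · rintro ⟨(_ | ⟨a, s⟩), hx, rfl⟩
    · exact Set.self_mem_Ici
    · exact le_of_lt (by simpa [gval] using Real.exp_pos a)
  · intro hy
    rcases eq_or_lt_of_le (Set.mem_Ici.mp hy : (0 : ℝ) ≤ y) with h | h
    · exact ⟨none, trivial, h⟩
    · exact ⟨some (Real.log y, true), rfl, by simp [gval, Real.exp_log h]⟩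

/-- The closed sets of the topology on `𝕋`: both the tangible and the ghost layers are
closed in the model `[0,∞)` of `𝕌̄`, and the ghost image of the tangible layer is
contained in the set. -/
def TIsClosed (W : Set T) : Prop :=
  IsClosed (gval '' (W ∩ {x | isTangible x})) ∧
  IsClosed (gval '' (W ∩ {x | isGhost x})) ∧
  nu '' (W ∩ {x | isTangible x}) ⊆ W ∩ {x | isGhost x}

/-- The topology on `𝕋`. -/
noncomputable instance : TopologicalSpace T :=
  TopologicalSpace.ofClosed {W | TIsClosed W}
    (by
      refine ⟨?_, ?_, ?_⟩ <;> simp [TIsClosed])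
    (fun A hA => by
      rcases A.eq_empty_or_nonempty with rfl | hne
      · rw [Set.sInter_empty]
        refine ⟨?_, ?_, ?_⟩
        · rw [Set.univ_inter, gval_image_tang]; exact isClosed_Ici
        · rw [Set.univ_inter, gval_image_ghost]; exact isClosed_Ici
        · rintro y ⟨x, ⟨-, _⟩, rfl⟩
          exact ⟨trivial, nu_isGhost x⟩
      · have : Nonempty A := hne.to_subtype
        have h1 : (⋂₀ A) ∩ {x : T | isTangible x}
            = ⋂ (W : A), ((W : Set T) ∩ {x | isTangible x}) := by
          ext x
          simp only [Set.mem_inter_iff, Set.mem_sInter, Set.mem_iInter, Set.mem_setOf_eq]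
          constructor
          · rintro ⟨h, ht⟩ W; exact ⟨h W W.2, ht⟩
          · intro h
            obtain ⟨W, hW⟩ := hne
            exact ⟨fun V hV => (h ⟨V, hV⟩).1, (h ⟨W, hW⟩).2⟩
        have h2 : (⋂₀ A) ∩ {x : T | isGhost x}
            = ⋂ (W : A), ((W : Set T) ∩ {x | isGhost x}) := by
          ext x
          simp only [Set.mem_inter_iff, Set.mem_sInter, Set.mem_iInter, Set.mem_setOf_eq]
          constructor
          · rintro ⟨h, ht⟩ W; exact ⟨h W W.2, ht⟩
          · intro h
            obtain ⟨W, hW⟩ := hne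
            exact ⟨fun V hV => (h ⟨V, hV⟩).1, (h ⟨W, hW⟩).2⟩
        refine ⟨?_, ?_, ?_⟩
        · rw [h1, Set.InjOn.image_iInter_eq
            (gval_injOn_tang.mono (Set.iUnion_subset fun W => Set.inter_subset_right))]
          exact isClosed_iInter fun W => (hA W.2).1
        · rw [h2, Set.InjOn.image_iInter_eq
            (gval_injOn_ghost.mono (Set.iUnion_subset fun W => Set.inter_subset_right))]
          exact isClosed_iInter fun W => (hA W.2).2.1
        · rintro y ⟨x, ⟨hx, hxt⟩, rfl⟩
          refine ⟨fun W hW => ((hA hW).2.2 ⟨x, ⟨hx W hW, hxt⟩, rfl⟩).1, nu_isGhost x⟩)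
    (fun A hA B hB => by
      have h1 : (A ∪ B) ∩ {x : T | isTangible x}
          = (A ∩ {x | isTangible x}) ∪ (B ∩ {x | isTangible x}) :=
        Set.union_inter_distrib_right A B _
      have h2 : (A ∪ B) ∩ {x : T | isGhost x}
          = (A ∩ {x | isGhost x}) ∪ (B ∩ {x | isGhost x}) :=
        Set.union_inter_distrib_right A B _
      refine ⟨?_, ?_, ?_⟩
      · rw [h1, Set.image_union]; exact hA.1.union hB.1
      · rw [h2, Set.image_union]; exact hA.2.1.union hB.2.1
      · rintro y ⟨x, ⟨hx, hxt⟩, rfl⟩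
        rcases hx with hxA | hxB
        · have h := hA.2.2 ⟨x, ⟨hxA, hxt⟩, rfl⟩
          exact ⟨Or.inl h.1, h.2⟩
        · have h := hB.2.2 ⟨x, ⟨hxB, hxt⟩, rfl⟩
          exact ⟨Or.inr h.1, h.2⟩)

end T

namespace T

/-- `f` dominates `g` if `f ⊕ g` and `f` agree as functions. -/
def Dominates {n : ℕ} (f g : MvPolynomial (Fin n) T) : Prop :=
  ∀ a : Fin n → T, MvPolynomial.eval a f + MvPolynomial.eval a g = MvPolynomial.eval a f

/-- The polynomial obtained from `f` by deleting the monomial with exponent `i`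
(setting its coefficient to `-∞`). -/
noncomputable def removeMono {n : ℕ} (i : Fin n →₀ ℕ) (f : MvPolynomial (Fin n) T) :
    MvPolynomial (Fin n) T :=
  ∑ j ∈ f.support.erase i, MvPolynomial.monomial j (MvPolynomial.coeff j f)

/-- The monomial of `f` with exponent `i` is essential. -/
def Essential {n : ℕ} (f : MvPolynomial (Fin n) T) (i : Fin n →₀ ℕ) : Prop :=
  i ∈ f.support ∧
    ¬ Dominates (removeMono i f) (MvPolynomial.monomial i (MvPolynomial.coeff i f))

open Classical in
/-- The essential part `f^e` of `f`: the sum of the essential monomials of `f`. -/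
noncomputable def essentialPart {n : ℕ} (f : MvPolynomial (Fin n) T) :
    MvPolynomial (Fin n) T :=
  ∑ i ∈ f.support,
    if Essential f i then MvPolynomial.monomial i (MvPolynomial.coeff i f) else 0

end T


set_option linter.unusedTactic false
set_option linter.unreachableTactic false
set_option linter.unnecessarySeqFocus false

namespace T

open MvPolynomial

lemma zero_def : (0 : T) = none := rfl
lemma one_def : (1 : T) = some (0, false) := rfl
lemma add_def (x y : T) : x + y = add x y := rfl
lemma mul_def (x y : T) : x * y = mul x y := rfl

/-- Value map to `WithBot ℝ`. -/
def vb : T → WithBot ℝ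
  | none => ⊥
  | some p => (p.1 : WithBot ℝ)

@[simp] lemma vb_none : vb none = ⊥ := rfl
@[simp] lemma vb_zero : vb 0 = ⊥ := rfl
@[simp] lemma vb_some (p : ℝ × Bool) : vb (some p) = (p.1 : WithBot ℝ) := rfl

lemma vb_eq_bot {x : T} : vb x = ⊥ ↔ x = 0 := by
  rcases x with _ | p
  · simp [zero_def]; rfl
  · simp [zero_def]

lemma vb_add (x y : T) : vb (x + y) = max (vb x) (vb y) := by
  rcases x with _ | ⟨a, s⟩ <;> rcases y with _ | ⟨b, t⟩
  · rfl
  · rfl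
  · rfl
  · show vb (add (some (a, s)) (some (b, t))) = _
    simp only [add, T]
    rcases lt_trichotomy a b with h | h | h
    · rw [if_pos h]
      simp [max_eq_right (le_of_lt h), h.le]
    · subst h
      rw [if_neg (lt_irrefl a), if_neg (lt_irrefl a)]
      simp
    · rw [if_neg (not_lt.2 h.le), if_pos h]
      simp [max_eq_left (le_of_lt h), h.le]

lemma vb_mul (x y : T) : vb (x * y) = vb x + vb y := by
  rcases x with _ | ⟨a, s⟩ <;> rcases y with _ | ⟨b, t⟩
  · rfl
  · rfl
  · rfl
  · simp only [mul_def, mul, vb_some]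
    exact_mod_cast rfl

lemma vb_sum {α : Type*} (F : Finset α) (t : α → T) :
    vb (∑ d ∈ F, t d) = F.sup (fun d => vb (t d)) := by
  induction F using Finset.cons_induction with
  | empty => simp
  | cons a F ha ih =>
      rw [Finset.sum_cons, vb_add, ih, Finset.sup_cons]

lemma add_eq_left {x y : T} (h : vb y < vb x) : x + y = x := by
  rcases x with _ | ⟨a, s⟩ <;> rcases y with _ | ⟨b, t⟩
  · exact absurd h (lt_irrefl _)
  · exact absurd h (by simp)
  · rfl
  · have hba : b < a := by
      simpa using (WithBot.coe_lt_coe.1 h)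
    show add _ _ = _
    simp only [add, T]
    rw [if_neg (not_lt.2 hba.le), if_pos hba]

lemma add_ne_cases {s t : T} (h : s + t ≠ s) :
    (vb s < vb t) ∨ (vb s = vb t ∧ ∃ v : ℝ, s = some (v, false)) := by
  rcases s with _ | ⟨a, σ⟩ <;> rcases t with _ | ⟨b, τ⟩
  · exact absurd rfl h
  · left; simp
  · exact absurd rfl h
  · replace h : add (some (a, σ)) (some (b, τ)) ≠ some (a, σ) := h
    simp only [add, T] at h
    rcases lt_trichotomy a b with hab | hab | hab
    · left
      simp only [vb_some]
      exact_mod_cast hab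
    · subst hab
      rcases σ with _ | _
      · right
        exact ⟨rfl, a, rfl⟩
      · rw [if_neg (lt_irrefl a), if_neg (lt_irrefl a)] at h
        exact absurd rfl h
    · rw [if_neg (not_lt.2 hab.le), if_pos hab] at h
      exact absurd rfl h

lemma add_tang {x y : T} {v : ℝ} (h : x + y = some (v, false)) :
    (x = some (v, false) ∧ vb y < (v : WithBot ℝ)) ∨
      (y = some (v, false) ∧ vb x < (v : WithBot ℝ)) := by
  rcases x with _ | ⟨a, σ⟩ <;> rcases y with _ | ⟨b, τ⟩ <;>
    replace h : add _ _ = some (v, false) := h <;>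
    simp only [add, T] at h
  · exact absurd h (by simp)
  · right; exact ⟨h, by simp⟩
  · left; exact ⟨h, by simp⟩
  · rcases lt_trichotomy a b with hab | hab | hab
    · rw [if_pos hab] at h
      right
      obtain ⟨rfl, rfl⟩ : b = v ∧ τ = false := by
        simpa [Prod.ext_iff] using Option.some_injective _ h
      refine ⟨rfl, ?_⟩
      simp only [vb_some]
      exact_mod_cast hab
    · subst hab
      rw [if_neg (lt_irrefl a), if_neg (lt_irrefl a)] at h
      exfalso
      have h' : ((a, true) : ℝ × Bool) = (v, false) := Option.some_injective _ h
      simpa using congrArg Prod.snd h'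
    · rw [if_neg (not_lt.2 hab.le), if_pos hab] at h
      left
      obtain ⟨rfl, rfl⟩ : a = v ∧ σ = false := by
        simpa [Prod.ext_iff] using Option.some_injective _ h
      refine ⟨rfl, ?_⟩
      simp only [vb_some]
      exact_mod_cast hab

lemma sum_eq_of_top {α : Type*} [DecidableEq α] {F : Finset α} {t : α → T} {d₀ : α} (h₀ : d₀ ∈ F)
    (h : ∀ d ∈ F, d ≠ d₀ → vb (t d) < vb (t d₀)) : ∑ d ∈ F, t d = t d₀ := by
  rw [← Finset.sum_erase_add F t h₀]
  rcases (F.erase d₀).eq_empty_or_nonempty with he | ⟨e, he⟩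
  · rw [he, Finset.sum_empty, zero_add]
  · have hbot : ⊥ < vb (t d₀) :=
      lt_of_le_of_lt bot_le (h e (Finset.mem_of_mem_erase he) (Finset.ne_of_mem_erase he))
    rw [add_comm]
    apply add_eq_left
    rw [vb_sum]
    rw [Finset.sup_lt_iff hbot]
    intro b hb
    exact h b (Finset.mem_of_mem_erase hb) (Finset.ne_of_mem_erase hb)

lemma sum_tang {α : Type*} {F : Finset α} {t : α → T} {v : ℝ}
    (h : ∑ d ∈ F, t d = some (v, false)) :
    ∃ j ∈ F, t j = some (v, false) ∧ ∀ d ∈ F, d ≠ j → vb (t d) < (v : WithBot ℝ) := by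
  induction F using Finset.cons_induction with
  | empty => simp [zero_def] at h
  | cons a F ha ih =>
      rw [Finset.sum_cons] at h
      rcases add_tang h with ⟨h1, h2⟩ | ⟨h1, h2⟩
      · refine ⟨a, Finset.mem_cons_self a F, h1, ?_⟩
        intro d hd hda
        rcases Finset.mem_cons.1 hd with rfl | hd
        · exact absurd rfl hda
        · refine lt_of_le_of_lt ?_ h2
          rw [vb_sum]
          exact Finset.le_sup (f := fun d => vb (t d)) hd
      · obtain ⟨j, hjF, hj1, hj2⟩ := ih h1
        refine ⟨j, Finset.mem_cons_of_mem hjF, hj1, ?_⟩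
        intro d hd hdj
        rcases Finset.mem_cons.1 hd with rfl | hd
        · exact h2
        · exact hj2 d hd hdj

end T
namespace T

open MvPolynomial

/-- `some` with the type `T`. -/
def somT (p : ℝ × Bool) : T := some p

@[simp] lemma vb_somT (p : ℝ × Bool) : vb (somT p) = (p.1 : WithBot ℝ) := rfl

lemma somT_ne_zero (p : ℝ × Bool) : somT p ≠ 0 := fun h => Option.some_ne_none _ h

lemma tang_mul_tang (a b : ℝ) : tang a * tang b = tang (a + b) := rfl

lemma somT_mul_somT (p q : ℝ × Bool) :
    somT p * somT q = somT (p.1 + q.1, p.2 || q.2) := rfl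

/-- Powers of `some`s are `some`s whose value adds. -/
lemma pow_somT (p : ℝ × Bool) (m : ℕ) :
    ∃ s : Bool, (somT p) ^ m = somT ((m : ℝ) * p.1, s) := by
  induction m with
  | zero => exact ⟨false, by rw [pow_zero, Nat.cast_zero, zero_mul]; rfl⟩
  | succ m ih =>
      obtain ⟨s, hs⟩ := ih
      refine ⟨s || p.2, ?_⟩
      rw [pow_succ, hs, somT_mul_somT]
      have : ((m : ℝ) + 1) * p.1 = (m : ℝ) * p.1 + p.1 := by ring
      simp [this]

lemma prod_somT {n : ℕ} (p : Fin n → ℝ × Bool) (d : Fin n →₀ ℕ) :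
    ∃ s : Bool, (∏ k, (somT (p k)) ^ d k) = somT (∑ k, (d k : ℝ) * (p k).1, s) := by
  classical
  have key : ∀ (F : Finset (Fin n)), ∃ s : Bool,
      (∏ k ∈ F, (somT (p k)) ^ d k) = somT (∑ k ∈ F, (d k : ℝ) * (p k).1, s) := by
    intro F
    induction F using Finset.cons_induction with
    | empty => exact ⟨false, by simp [somT, one_def]; rfl⟩
    | cons a F ha ih =>
        obtain ⟨s, hs⟩ := ih
        obtain ⟨sa, hsa⟩ := pow_somT (p a) (d a)
        refine ⟨sa || s, ?_⟩
        rw [Finset.prod_cons, Finset.sum_cons, hs, hsa, somT_mul_somT]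
  exact key Finset.univ

lemma tang_pow (a : ℝ) (m : ℕ) : (tang a) ^ m = tang ((m : ℝ) * a) := by
  induction m with
  | zero => rw [pow_zero, Nat.cast_zero, zero_mul]; rfl
  | succ m ih =>
      rw [pow_succ, ih]
      show somT _ * somT _ = _
      rw [somT_mul_somT]
      have : ((m : ℝ) + 1) * a = (m : ℝ) * a + a := by ring
      simp [somT, tang, this]; rfl

lemma tang_prod {n : ℕ} (x : Fin n → ℝ) (d : Fin n →₀ ℕ) :
    (∏ k, (tang (x k)) ^ d k) = tang (∑ k, (d k : ℝ) * x k) := by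
  classical
  have key : ∀ (F : Finset (Fin n)),
      (∏ k ∈ F, (tang (x k)) ^ d k) = tang (∑ k ∈ F, (d k : ℝ) * x k) := by
    intro F
    induction F using Finset.cons_induction with
    | empty => simp [tang, one_def]; rfl
    | cons a F ha ih =>
        rw [Finset.prod_cons, Finset.sum_cons, ih, tang_pow, tang_mul_tang]
  exact key Finset.univ

/-- The affine value function of the monomial of `f` at exponent `d`. -/
noncomputable def Lf {n : ℕ} (f : MvPolynomial (Fin n) T) (d : Fin n →₀ ℕ)
    (x : Fin n → ℝ) : ℝ :=
  (f.coeff d).elim 0 Prod.fst + ∑ k, (d k : ℝ) * x k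

lemma coeff_somT {n : ℕ} {f : MvPolynomial (Fin n) T} {d : Fin n →₀ ℕ}
    (hd : d ∈ f.support) : ∃ c : ℝ × Bool, f.coeff d = somT c := by
  have := MvPolynomial.mem_support_iff.1 hd
  rcases h : f.coeff d with _ | c
  · exact absurd (h.trans zero_def.symm) this
  · exact ⟨c, rfl⟩

/-- The term of `f` at exponent `d`, at the point `somT ∘ p`. -/
lemma term_eq {n : ℕ} {f : MvPolynomial (Fin n) T} {d : Fin n →₀ ℕ}
    (hd : d ∈ f.support) (p : Fin n → ℝ × Bool) :
    ∃ s : Bool, f.coeff d * ∏ k, (somT (p k)) ^ d k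
      = somT (Lf f d (fun k => (p k).1), s) := by
  obtain ⟨c, hc⟩ := coeff_somT hd
  obtain ⟨s, hs⟩ := prod_somT p d
  refine ⟨c.2 || s, ?_⟩
  rw [hc, hs, somT_mul_somT, Lf, hc]
  rfl

lemma term_tang {n : ℕ} {f : MvPolynomial (Fin n) T} {d : Fin n →₀ ℕ}
    (hd : d ∈ f.support) (x : Fin n → ℝ) :
    ∃ c : ℝ × Bool, f.coeff d = somT c ∧
      f.coeff d * ∏ k, (tang (x k)) ^ d k = somT (Lf f d x, c.2) := by
  obtain ⟨c, hc⟩ := coeff_somT hd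
  refine ⟨c, hc, ?_⟩
  rw [tang_prod, hc]
  show somT c * somT _ = _
  rw [somT_mul_somT, Lf, hc]
  simp [somT]; rfl

end T
namespace T

open MvPolynomial

variable {n : ℕ}

lemma removeMono_add_monomial {f : MvPolynomial (Fin n) T} {i : Fin n →₀ ℕ}
    (hi : i ∈ f.support) :
    removeMono i f + monomial i (f.coeff i) = f := by
  classical
  rw [removeMono, Finset.sum_erase_add _ _ hi, support_sum_monomial_coeff]

lemma coeff_removeMono (f : MvPolynomial (Fin n) T) (i j : Fin n →₀ ℕ) :
    (removeMono i f).coeff j = if j = i then 0 else f.coeff j := by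
  classical
  rw [removeMono]
  rw [MvPolynomial.coeff_sum]
  simp only [MvPolynomial.coeff_monomial]
  by_cases hji : j = i
  · subst hji
    rw [if_pos rfl]
    apply Finset.sum_eq_zero
    intro d hd
    rw [if_neg]
    exact fun h => (Finset.ne_of_mem_erase hd) h
  · rw [if_neg hji]
    by_cases hj : j ∈ f.support
    · rw [Finset.sum_eq_single j]
      · rw [if_pos rfl]
      · intro d _ hdj
        rw [if_neg hdj]
      · intro h
        exact absurd (Finset.mem_erase.2 ⟨hji, hj⟩) h
    · rw [Finset.sum_eq_zero, eq_comm]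
      · simpa using hj
      · intro d hd
        rw [if_neg]
        rintro rfl
        exact hj (Finset.mem_of_mem_erase hd)

lemma support_removeMono (f : MvPolynomial (Fin n) T) (i : Fin n →₀ ℕ) :
    (removeMono i f).support = f.support.erase i := by
  classical
  ext j
  rw [MvPolynomial.mem_support_iff, coeff_removeMono, Finset.mem_erase]
  by_cases hji : j = i
  · simp [hji]
  · simp [hji, MvPolynomial.mem_support_iff]

lemma eval_decomp {f : MvPolynomial (Fin n) T} {i : Fin n →₀ ℕ} (hi : i ∈ f.support)
    (a : Fin n → T) :
    eval a f = eval a (removeMono i f) + eval a (monomial i (f.coeff i)) := by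
  conv_lhs => rw [← removeMono_add_monomial hi]
  rw [map_add]

lemma essential_iff {f : MvPolynomial (Fin n) T} {i : Fin n →₀ ℕ} :
    Essential f i ↔ i ∈ f.support ∧ ∃ a, eval a f ≠ eval a (removeMono i f) := by
  unfold Essential Dominates
  constructor
  · rintro ⟨hi, hd⟩
    refine ⟨hi, ?_⟩
    by_contra h
    push_neg at h
    exact hd fun a => by rw [← eval_decomp hi a, h a]
  · rintro ⟨hi, a, ha⟩
    refine ⟨hi, fun hd => ha ?_⟩
    rw [eval_decomp hi a, hd a]

/-- Evaluation of `removeMono` at finite points as a sum of terms. -/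
lemma eval_removeMono (f : MvPolynomial (Fin n) T) (i : Fin n →₀ ℕ) (a : Fin n → T) :
    eval a (removeMono i f) =
      ∑ j ∈ f.support.erase i, f.coeff j * ∏ k, a k ^ j k := by
  classical
  rw [eval_eq' a, support_removeMono]
  apply Finset.sum_congr rfl
  intro j hj
  rw [coeff_removeMono, if_neg (Finset.ne_of_mem_erase hj)]

/-- value of eval at a tangible point. -/
lemma vb_eval_tang (f : MvPolynomial (Fin n) T) (x : Fin n → ℝ) :
    vb (eval (fun k => tang (x k)) f) =
      f.support.sup (fun d => ((Lf f d x : ℝ) : WithBot ℝ)) := by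
  rw [eval_eq', vb_sum]
  apply Finset.sup_congr rfl
  intro d hd
  obtain ⟨c, _, hterm⟩ := term_tang hd x
  rw [hterm, vb_somT]

/-- Strictly dominant monomial computes the value at a tangible point (CL1). -/
lemma eval_strict {f : MvPolynomial (Fin n) T} {i : Fin n →₀ ℕ} (hi : i ∈ f.support)
    {x : Fin n → ℝ} (h : ∀ j ∈ f.support, j ≠ i → Lf f j x < Lf f i x) :
    ∀ c : ℝ × Bool, f.coeff i = somT c →
      eval (fun k => tang (x k)) f = somT (Lf f i x, c.2) := by
  intro c hc
  rw [eval_eq']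
  obtain ⟨c', hc', hterm⟩ := term_tang hi x
  rw [hc] at hc'
  have hcc : c = c' := Option.some_injective _ hc'
  subst hcc
  rw [← hterm]
  apply sum_eq_of_top hi
  intro d hd hdi
  obtain ⟨cd, _, htd⟩ := term_tang hd x
  rw [htd, hterm, vb_somT, vb_somT]
  exact_mod_cast h d hd hdi

lemma vb_eval_removeMono_lt {f : MvPolynomial (Fin n) T} {i : Fin n →₀ ℕ}
    {x : Fin n → ℝ} (h : ∀ j ∈ f.support, j ≠ i → Lf f j x < Lf f i x) :
    vb (eval (fun k => tang (x k)) (removeMono i f)) < ((Lf f i x : ℝ) : WithBot ℝ) := by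
  classical
  rw [eval_removeMono, vb_sum]
  rw [Finset.sup_lt_iff (by exact WithBot.bot_lt_coe _)]
  intro j hj
  obtain ⟨cj, _, htj⟩ := term_tang (Finset.mem_of_mem_erase hj) x
  rw [htj, vb_somT]
  exact_mod_cast h j (Finset.mem_of_mem_erase hj) (Finset.ne_of_mem_erase hj)

/-- Strict witness implies essential. -/
lemma essential_of_strict {f : MvPolynomial (Fin n) T} {i : Fin n →₀ ℕ} (hi : i ∈ f.support)
    {x : Fin n → ℝ} (h : ∀ j ∈ f.support, j ≠ i → Lf f j x < Lf f i x) :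
    Essential f i := by
  rw [essential_iff]
  refine ⟨hi, fun k => tang (x k), fun heq => ?_⟩
  obtain ⟨c, hc⟩ := coeff_somT hi
  rw [eval_strict hi h c hc] at heq
  have := vb_eval_removeMono_lt h
  rw [← heq, vb_somT] at this
  exact lt_irrefl _ this

end T
namespace T

open MvPolynomial Filter Topology

variable {n : ℕ}

lemma Lf_perturb (f : MvPolynomial (Fin n) T) (d : Fin n →₀ ℕ) (x u : Fin n → ℝ) (ε : ℝ) :
    Lf f d (fun k => x k + ε * u k) = Lf f d x + ε * ∑ k, (d k : ℝ) * u k := by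
  simp only [Lf]
  have : ∀ k ∈ Finset.univ (α := Fin n),
      (d k : ℝ) * (x k + ε * u k) = (d k : ℝ) * x k + ε * ((d k : ℝ) * u k) := by
    intro k _; ring
  rw [Finset.sum_congr rfl this, Finset.sum_add_distrib, ← Finset.mul_sum]
  ring

/-- Perturbation: a tie between the monomials `i ≠ j`, everything else strictly below,
can be perturbed into strict dominance of `i`. -/
lemma perturb {f : MvPolynomial (Fin n) T} {i j : Fin n →₀ ℕ} (hij : i ≠ j)
    {x : Fin n → ℝ} (hj : Lf f j x = Lf f i x)
    (h : ∀ d ∈ f.support, d ≠ i → d ≠ j → Lf f d x < Lf f i x) :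
    ∃ x' : Fin n → ℝ, ∀ d ∈ f.support, d ≠ i → Lf f d x' < Lf f i x' := by
  classical
  set u : Fin n → ℝ := fun k => (i k : ℝ) - (j k : ℝ) with hu
  have hqij : 0 < (∑ k, (i k : ℝ) * u k) - ∑ k, (j k : ℝ) * u k := by
    have hsq : (∑ k, (i k : ℝ) * u k) - ∑ k, (j k : ℝ) * u k = ∑ k, u k ^ 2 := by
      rw [← Finset.sum_sub_distrib]
      apply Finset.sum_congr rfl
      intro k _
      simp only [hu]
      ring
    rw [hsq]
    obtain ⟨k₀, hk₀⟩ := Finsupp.ne_iff.1 hij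
    refine Finset.sum_pos' (fun k _ => sq_nonneg _) ⟨k₀, Finset.mem_univ _, ?_⟩
    refine sq_pos_of_ne_zero ?_
    simp only [hu, sub_ne_zero]
    exact_mod_cast hk₀
  have htend : ∀ d : Fin n →₀ ℕ,
      Tendsto (fun ε : ℝ => Lf f d x + ε * ∑ k, (d k : ℝ) * u k) (𝓝[>] 0)
        (𝓝 (Lf f d x)) := by
    intro d
    have h2 : Tendsto (fun ε : ℝ => Lf f d x + ε * ∑ k, (d k : ℝ) * u k) (𝓝 0)
        (𝓝 (Lf f d x + 0 * ∑ k, (d k : ℝ) * u k)) :=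
      ((continuous_const.add (continuous_id'.mul continuous_const)).tendsto 0)
    rw [zero_mul, add_zero] at h2
    exact h2.mono_left nhdsWithin_le_nhds
  have hev : ∀ᶠ ε in 𝓝[>] (0 : ℝ), ∀ d ∈ f.support.erase i,
      Lf f d (fun k => x k + ε * u k) < Lf f i (fun k => x k + ε * u k) := by
    rw [Filter.eventually_all_finset]
    intro d hd
    by_cases hdj : d = j
    · subst hdj
      filter_upwards [self_mem_nhdsWithin] with ε hε
      rw [Lf_perturb, Lf_perturb, hj]
      have hε' : (0 : ℝ) < ε := hε
      nlinarith
    · have hlt := h d (Finset.mem_of_mem_erase hd) (Finset.ne_of_mem_erase hd) hdj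
      filter_upwards [(htend d).eventually_lt (htend i) hlt] with ε hε
      rw [Lf_perturb, Lf_perturb]
      exact hε
  obtain ⟨ε, hε⟩ := hev.exists
  exact ⟨fun k => x k + ε * u k, fun d hd hdi => hε d (Finset.mem_erase.2 ⟨hdi, hd⟩)⟩

end T
namespace T

open MvPolynomial Filter Topology

variable {n : ℕ}

/-- Step 1: an essentiality witness can be chosen with all coordinates finite. -/
lemma finite_witness {f : MvPolynomial (Fin n) T} {i : Fin n →₀ ℕ} (hi : i ∈ f.support)
    (a : Fin n → T) (hw : eval a f ≠ eval a (removeMono i f)) :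
    ∃ p : Fin n → ℝ × Bool,
      eval (fun k => somT (p k)) f ≠ eval (fun k => somT (p k)) (removeMono i f) := by
  classical
  set t : T := eval a (monomial i (f.coeff i)) with ht
  set s : T := eval a (removeMono i f) with hs
  have hne : s + t ≠ s := by
    rw [hs, ht, ← eval_decomp hi a]
    exact hw
  have htne : t ≠ 0 := by
    intro ht0
    exact hne (by rw [ht0, add_zero])
  -- the monomial `i` only uses live coordinates
  have hteq : t = f.coeff i * ∏ k, a k ^ i k := by
    rw [ht, eval_monomial, Finsupp.prod_pow]
  have hidead : ∀ k, a k = 0 → i k = 0 := by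
    intro k hk
    by_contra hik
    apply htne
    rw [hteq]
    have : (∏ k, a k ^ i k) = 0 :=
      Finset.prod_eq_zero (Finset.mem_univ k) (by rw [hk, zero_pow hik])
    rw [this, mul_zero]
  -- terms of `f` at `a`
  set tm : (Fin n →₀ ℕ) → T := fun j => f.coeff j * ∏ k, a k ^ j k with htm
  have hdead_tm : ∀ j : Fin n →₀ ℕ, (¬ ∀ k, a k = 0 → j k = 0) → tm j = 0 := by
    intro j hj
    push_neg at hj
    obtain ⟨k, hk0, hjk⟩ := hj
    have : (∏ k, a k ^ j k) = 0 :=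
      Finset.prod_eq_zero (Finset.mem_univ k) (by rw [hk0, zero_pow hjk])
    rw [htm]
    dsimp only
    rw [this, mul_zero]
  -- the finite points
  set p : ℝ → Fin n → ℝ × Bool := fun M k => (a k).getD (M, false) with hp
  have ha' : ∀ M k, a k ≠ 0 → somT (p M k) = a k := by
    intro M k hk
    rcases hak : a k with _ | q
    · exact absurd (hak.trans zero_def.symm) hk
    · rw [hp]; dsimp only; rw [hak]; rfl
  have hlive_tm : ∀ (M : ℝ) (j : Fin n →₀ ℕ), (∀ k, a k = 0 → j k = 0) →
      f.coeff j * ∏ k, somT (p M k) ^ j k = tm j := by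
    intro M j hj
    rw [htm]
    dsimp only
    congr 1
    apply Finset.prod_congr rfl
    intro k _
    by_cases hk : a k = 0
    · rw [hj k hk, pow_zero, pow_zero]
    · rw [ha' M k hk]
  -- decomposition of the removeMono sum at the perturbed point
  have hsplit : ∀ M : ℝ,
      eval (fun k => somT (p M k)) (removeMono i f)
        = s + ∑ j ∈ (f.support.erase i).filter (fun j => ¬ ∀ k, a k = 0 → j k = 0),
            f.coeff j * ∏ k, somT (p M k) ^ j k := by
    intro M
    rw [eval_removeMono]
    rw [← Finset.sum_filter_add_sum_filter_not (f.support.erase i)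
      (fun j => ∀ k, a k = 0 → j k = 0)]
    congr 1
    · rw [Finset.sum_congr rfl (fun j hj => hlive_tm M j (Finset.mem_filter.1 hj).2)]
      rw [hs, eval_removeMono]
      rw [← Finset.sum_filter_add_sum_filter_not (f.support.erase i)
        (fun j => ∀ k, a k = 0 → j k = 0)]
      rw [Finset.sum_congr rfl (fun j hj => hdead_tm j (Finset.mem_filter.1 hj).2), Finset.sum_const_zero, add_zero]
  -- the monomial term is unchanged
  have hmono' : ∀ M : ℝ, eval (fun k => somT (p M k)) (monomial i (f.coeff i)) = t := by
    intro M
    rw [eval_monomial, Finsupp.prod_pow, hlive_tm M i hidead, htm, hteq]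
  -- value of the dead terms tends to -infinity
  have hvb_dead : ∀ (M : ℝ) (j : Fin n →₀ ℕ), j ∈ f.support →
      vb (f.coeff j * ∏ k, somT (p M k) ^ j k) = ((Lf f j (fun k => (p M k).1) : ℝ) : WithBot ℝ) := by
    intro M j hj
    obtain ⟨sj, hsj⟩ := term_eq hj (p M)
    rw [hsj, vb_somT]
  have hLf_aff : ∀ (j : Fin n →₀ ℕ) (M : ℝ),
      Lf f j (fun k => (p M k).1)
        = ((f.coeff j).elim 0 Prod.fst
            + ∑ k ∈ Finset.univ.filter (fun k => ¬ a k = 0), (j k : ℝ) * (p 0 k).1)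
          + (∑ k ∈ Finset.univ.filter (fun k => a k = 0), (j k : ℝ)) * M := by
    intro j M
    rw [Lf]
    rw [← Finset.sum_filter_add_sum_filter_not Finset.univ (fun k => a k = 0)
      (fun k => (j k : ℝ) * (p M k).1)]
    rw [Finset.sum_mul]
    have h1 : ∀ k ∈ Finset.univ.filter (fun k => a k = 0),
        (j k : ℝ) * (p M k).1 = (j k : ℝ) * M := by
      intro k hk
      have : a k = 0 := (Finset.mem_filter.1 hk).2
      rw [hp]; dsimp only
      rw [this.trans zero_def, Option.getD_none]
    have h2 : ∀ k ∈ Finset.univ.filter (fun k => ¬ a k = 0),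
        (j k : ℝ) * (p M k).1 = (j k : ℝ) * (p 0 k).1 := by
      intro k hk
      have hak : ¬ a k = 0 := (Finset.mem_filter.1 hk).2
      rcases hak' : a k with _ | q
      · exact absurd (hak'.trans zero_def.symm) hak
      · rw [hp]; dsimp only; rw [hak']; rfl
    rw [Finset.sum_congr rfl h1, Finset.sum_congr rfl h2]
    ring
  have hslope : ∀ j : Fin n →₀ ℕ, (¬ ∀ k, a k = 0 → j k = 0) →
      (0 : ℝ) < ∑ k ∈ Finset.univ.filter (fun k => a k = 0), (j k : ℝ) := by
    intro j hj
    push_neg at hj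
    obtain ⟨k, hk0, hjk⟩ := hj
    refine Finset.sum_pos' (fun k _ => by positivity) ⟨k, Finset.mem_filter.2 ⟨Finset.mem_univ _, hk0⟩, ?_⟩
    exact_mod_cast Nat.pos_of_ne_zero hjk
  -- choose the bound r₀
  obtain ⟨ct, hct⟩ : ∃ q : ℝ × Bool, t = somT q := by
    rcases t with _ | q
    · exact absurd (zero_def.symm ▸ rfl) htne
    · exact ⟨q, rfl⟩
  obtain ⟨r₀, hr₀t, hr₀s⟩ : ∃ r₀ : ℝ,
      ((r₀ : WithBot ℝ) ≤ vb t) ∧ (s ≠ 0 → (r₀ : WithBot ℝ) ≤ vb s) := by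
    rcases hsx : s with _ | q
    · exact ⟨ct.1, by rw [hct]; exact le_refl _,
        fun h => absurd zero_def.symm h⟩
    · refine ⟨min ct.1 q.1, ?_, fun _ => ?_⟩
      · rw [hct, vb_somT]
        exact_mod_cast min_le_left _ _
      · rw [vb_some]
        exact_mod_cast min_le_right _ _
  -- eventually all dead terms are below r₀
  have hev : ∀ᶠ M in (atBot : Filter ℝ),
      ∀ j ∈ (f.support.erase i).filter (fun j => ¬ ∀ k, a k = 0 → j k = 0),
        Lf f j (fun k => (p M k).1) < r₀ := by
    rw [Filter.eventually_all_finset]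
    intro j hj
    have hjdead := (Finset.mem_filter.1 hj).2
    have hmem := Finset.mem_of_mem_erase (Finset.mem_filter.1 hj).1
    have htendj : Tendsto (fun M : ℝ => Lf f j (fun k => (p M k).1)) atBot atBot := by
      have := hslope j hjdead
      have hm : Tendsto (fun M : ℝ =>
          ((f.coeff j).elim 0 Prod.fst
            + ∑ k ∈ Finset.univ.filter (fun k => ¬ a k = 0), (j k : ℝ) * (p 0 k).1)
          + (∑ k ∈ Finset.univ.filter (fun k => a k = 0), (j k : ℝ)) * M) atBot atBot := by
        apply Filter.tendsto_atBot_add_const_left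
        exact Tendsto.const_mul_atBot this tendsto_id
      refine hm.congr ?_
      intro M
      rw [hLf_aff j M]
    exact htendj.eventually (eventually_lt_atBot r₀)
  obtain ⟨M, hM⟩ := hev.exists
  refine ⟨p M, ?_⟩
  -- now conclude
  have hu : vb (∑ j ∈ (f.support.erase i).filter (fun j => ¬ ∀ k, a k = 0 → j k = 0),
      f.coeff j * ∏ k, somT (p M k) ^ j k) < (r₀ : WithBot ℝ) := by
    rw [vb_sum]
    rw [Finset.sup_lt_iff (by exact WithBot.bot_lt_coe _)]
    intro j hj
    rw [hvb_dead M j (Finset.mem_of_mem_erase (Finset.mem_filter.1 hj).1)]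
    exact_mod_cast hM j hj
  rw [eval_decomp hi (fun k => somT (p M k)), hmono', hsplit M]
  set u : T := ∑ j ∈ (f.support.erase i).filter (fun j => ¬ ∀ k, a k = 0 → j k = 0),
      f.coeff j * ∏ k, somT (p M k) ^ j k with hudef
  have hut : vb u < vb t := lt_of_lt_of_le hu hr₀t
  by_cases hs0 : s = 0
  · rw [hs0, zero_add]
    have h1 : u + t = t := by rw [add_comm]; exact add_eq_left hut
    rw [h1]
    intro hcon
    rw [← hcon] at hut
    exact lt_irrefl _ hut
  · rw [add_eq_left (lt_of_lt_of_le hu (hr₀s hs0))]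
    exact hne

end T
namespace T

open MvPolynomial

variable {n : ℕ}

/-- Step 2: a finite witness yields a strict witness (CL2). -/
lemma strict_of_finite_witness {f : MvPolynomial (Fin n) T} {i : Fin n →₀ ℕ}
    (hi : i ∈ f.support) (p : Fin n → ℝ × Bool)
    (hw : eval (fun k => somT (p k)) f ≠ eval (fun k => somT (p k)) (removeMono i f)) :
    ∃ x : Fin n → ℝ, ∀ j ∈ f.support, j ≠ i → Lf f j x < Lf f i x := by
  classical
  set a : Fin n → T := fun k => somT (p k) with hadef
  set x : Fin n → ℝ := fun k => (p k).1 with hxdef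
  have hne : eval a (removeMono i f) + eval a (monomial i (f.coeff i))
      ≠ eval a (removeMono i f) := by
    rw [← eval_decomp hi a]
    exact hw
  obtain ⟨si, hti⟩ : ∃ s : Bool,
      eval a (monomial i (f.coeff i)) = somT (Lf f i x, s) := by
    rw [eval_monomial, Finsupp.prod_pow]
    exact term_eq hi p
  have hrm : eval a (removeMono i f)
      = ∑ j ∈ f.support.erase i, f.coeff j * ∏ k, a k ^ j k := eval_removeMono f i a
  have hvb_term : ∀ j ∈ f.support,
      vb (f.coeff j * ∏ k, a k ^ j k) = ((Lf f j x : ℝ) : WithBot ℝ) := by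
    intro j hj
    obtain ⟨sj, hsj⟩ := term_eq hj p
    rw [hsj, vb_somT]
  rcases add_ne_cases hne with hlt | ⟨heq, v, hsv⟩
  · -- the monomial `i` strictly dominates at `x` already
    refine ⟨x, fun j hj hji => ?_⟩
    have hj' : j ∈ f.support.erase i := Finset.mem_erase.2 ⟨hji, hj⟩
    have hle : vb (f.coeff j * ∏ k, a k ^ j k) ≤ vb (eval a (removeMono i f)) := by
      rw [hrm, vb_sum]
      exact Finset.le_sup (f := fun j => vb (f.coeff j * ∏ k, a k ^ j k)) hj'
    rw [hvb_term j hj] at hle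
    rw [hti, vb_somT] at hlt
    exact_mod_cast lt_of_le_of_lt hle hlt
  · -- tie with a tangible sum: use `sum_tang` and perturb
    have hsum : ∑ j ∈ f.support.erase i, f.coeff j * ∏ k, a k ^ j k = some (v, false) := by
      rw [← hrm, hsv]
    obtain ⟨j₀, hj₀, hj₀t, hj₀lt⟩ := sum_tang hsum
    have hj₀mem := Finset.mem_of_mem_erase hj₀
    have hvLfi : v = Lf f i x := by
      rw [hsv, hti] at heq
      rw [vb_some, vb_somT] at heq
      exact_mod_cast heq
    have hLfj₀ : Lf f j₀ x = Lf f i x := by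
      have h2 := hvb_term j₀ hj₀mem
      rw [hj₀t, vb_some] at h2
      rw [← hvLfi]
      exact_mod_cast h2.symm
    have hothers : ∀ d ∈ f.support, d ≠ i → d ≠ j₀ → Lf f d x < Lf f i x := by
      intro d hd hdi hdj₀
      have hd' : d ∈ f.support.erase i := Finset.mem_erase.2 ⟨hdi, hd⟩
      have := hj₀lt d hd' hdj₀
      rw [hvb_term d hd] at this
      rw [← hvLfi]
      exact_mod_cast this
    exact perturb (Finset.ne_of_mem_erase hj₀).symm hLfj₀ hothers

/-- CL2: essential monomials admit a strict tangible witness. -/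
lemma strict_of_essential {f : MvPolynomial (Fin n) T} {i : Fin n →₀ ℕ}
    (h : Essential f i) :
    ∃ x : Fin n → ℝ, ∀ j ∈ f.support, j ≠ i → Lf f j x < Lf f i x := by
  obtain ⟨hi, a, ha⟩ := essential_iff.1 h
  obtain ⟨p, hp⟩ := finite_witness hi a ha
  exact strict_of_finite_witness hi p hp

end T
namespace T

open MvPolynomial

variable {n : ℕ}

lemma Lf_removeMono (f : MvPolynomial (Fin n) T) (i : Fin n →₀ ℕ) {j : Fin n →₀ ℕ}
    (hji : j ≠ i) (x : Fin n → ℝ) : Lf (removeMono i f) j x = Lf f j x := by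
  rw [Lf, Lf, coeff_removeMono, if_neg hji]

/-- Removing an inessential monomial does not change essentiality of the others. -/
lemma essential_removeMono_iff {f : MvPolynomial (Fin n) T} {j : Fin n →₀ ℕ}
    (hj : j ∈ f.support)
    (hdom : Dominates (removeMono j f) (monomial j (f.coeff j)))
    {i : Fin n →₀ ℕ} (hij : i ≠ j) :
    Essential (removeMono j f) i ↔ Essential f i := by
  constructor
  · intro h
    obtain ⟨x, hx⟩ := strict_of_essential h
    have hi : i ∈ f.support := by
      have h1 := h.1
      rw [support_removeMono] at h1
      exact Finset.mem_of_mem_erase h1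
    have hx' : ∀ d ∈ f.support, d ≠ i → d ≠ j → Lf f d x < Lf f i x := by
      intro d hd hdi hdj
      have hd' : d ∈ (removeMono j f).support := by
        rw [support_removeMono]
        exact Finset.mem_erase.2 ⟨hdj, hd⟩
      have h2 := hx d hd' hdi
      rwa [Lf_removeMono f j hdj x, Lf_removeMono f j hij x] at h2
    rcases lt_trichotomy (Lf f j x) (Lf f i x) with hlt | heq | hgt
    · refine essential_of_strict hi (x := x) ?_
      intro d hd hdi
      by_cases hdj : d = j
      · subst hdj; exact hlt
      · exact hx' d hd hdi hdj
    · obtain ⟨x', hx''⟩ := perturb hij heq hx'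
      exact essential_of_strict hi hx''
    · exfalso
      have hjess : Essential f j := by
        refine essential_of_strict hj (x := x) ?_
        intro d hd hdj
        by_cases hdi : d = i
        · subst hdi; exact hgt
        · exact lt_trans (hx' d hd hdi hdj) hgt
      exact hjess.2 hdom
  · intro h
    obtain ⟨x, hx⟩ := strict_of_essential h
    refine essential_of_strict (f := removeMono j f) ?_ (x := x) ?_
    · rw [support_removeMono]
      exact Finset.mem_erase.2 ⟨hij, h.1⟩
    · intro d hd hdi
      rw [support_removeMono] at hd
      have h2 := hx d (Finset.mem_of_mem_erase hd) hdi
      rwa [← Lf_removeMono f j (Finset.ne_of_mem_erase hd) x,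
        ← Lf_removeMono f j hij x] at h2

lemma not_essential_of_dominates {f : MvPolynomial (Fin n) T} {j : Fin n →₀ ℕ}
    (hdom : Dominates (removeMono j f) (monomial j (f.coeff j))) : ¬ Essential f j :=
  fun h => h.2 hdom

lemma essentialPart_eq_self {f : MvPolynomial (Fin n) T}
    (h : ∀ i ∈ f.support, Essential f i) : essentialPart f = f := by
  rw [essentialPart]
  rw [Finset.sum_congr rfl (fun i hi => if_pos (h i hi))]
  exact support_sum_monomial_coeff f

lemma essentialPart_removeMono {f : MvPolynomial (Fin n) T} {j : Fin n →₀ ℕ}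
    (hj : j ∈ f.support)
    (hdom : Dominates (removeMono j f) (monomial j (f.coeff j))) :
    essentialPart (removeMono j f) = essentialPart f := by
  classical
  rw [essentialPart, essentialPart, support_removeMono]
  rw [← Finset.sum_erase f.support
    (f := fun i => if Essential f i then (monomial i (f.coeff i) : MvPolynomial (Fin n) T) else 0)
    (if_neg (not_essential_of_dominates hdom))]
  apply Finset.sum_congr rfl
  intro i hi
  have hij := Finset.ne_of_mem_erase hi
  rw [coeff_removeMono, if_neg hij]
  by_cases h : Essential f i
  · rw [if_pos ((essential_removeMono_iff hj hdom hij).2 h), if_pos h]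
  · rw [if_neg h, if_neg]
    exact fun hc => h ((essential_removeMono_iff hj hdom hij).1 hc)

/-- Main induction: `f` is equivalent to its essential part, and every monomial of the
essential part is essential there. -/
theorem equiv_essentialPart (f : MvPolynomial (Fin n) T) :
    (∀ a : Fin n → T, eval a f = eval a (essentialPart f)) ∧
      (∀ i ∈ (essentialPart f).support, Essential (essentialPart f) i) := by
  classical
  generalize hN : f.support.card = N
  induction N using Nat.strong_induction_on generalizing f with
  | _ N ih =>
    by_cases hall : ∀ i ∈ f.support, Essential f i
    · rw [essentialPart_eq_self hall]
      exact ⟨fun a => rfl, hall⟩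
    · push_neg at hall
      obtain ⟨j, hj, hjness⟩ := hall
      have hdom : Dominates (removeMono j f) (monomial j (f.coeff j)) := by
        by_contra hd
        exact hjness ⟨hj, hd⟩
      have hcard : (removeMono j f).support.card < N := by
        rw [support_removeMono, ← hN]
        exact Finset.card_erase_lt_of_mem hj
      obtain ⟨ih1, ih2⟩ := ih _ hcard (removeMono j f) rfl
      rw [← essentialPart_removeMono hj hdom]
      constructor
      · intro a
        rw [eval_decomp hj a, hdom a]
        exact ih1 a
      · exact ih2

end T
namespace T

open MvPolynomial

variable {n : ℕ}

lemma Lf_continuous (f : MvPolynomial (Fin n) T) (d : Fin n →₀ ℕ) :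
    Continuous fun x : Fin n → ℝ => Lf f d x :=
  continuous_const.add (continuous_finset_sum _ fun k _ => continuous_const.mul (continuous_apply k))

/-- Coefficients at essential monomials are determined by the polynomial function. -/
lemma coeff_eq_of_equiv {h₁ h₂ : MvPolynomial (Fin n) T}
    (heq : ∀ a : Fin n → T, eval a h₁ = eval a h₂) {i : Fin n →₀ ℕ}
    (hEss : Essential h₁ i) : h₂.coeff i = h₁.coeff i := by
  classical
  obtain ⟨x₀, hx₀⟩ := strict_of_essential hEss
  have hi := hEss.1
  set U : Set (Fin n → ℝ) := {x | ∀ j ∈ h₁.support, j ≠ i → Lf h₁ j x < Lf h₁ i x} with hU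
  have hUopen : IsOpen U := by
    have hrw : U = ⋂ j ∈ h₁.support.erase i, {x | Lf h₁ j x < Lf h₁ i x} := by
      ext x
      simp only [hU, Set.mem_setOf_eq, Set.mem_iInter, Finset.mem_erase]
      constructor
      · rintro h j ⟨hji, hj⟩
        exact h j hj hji
      · intro h j hj hji
        exact h j ⟨hji, hj⟩
    rw [hrw]
    exact isOpen_biInter_finset fun j _ => isOpen_lt (Lf_continuous h₁ j) (Lf_continuous h₁ i)
  obtain ⟨ε, hε, hball⟩ := Metric.isOpen_iff.1 hUopen x₀ hx₀
  obtain ⟨c, hc⟩ := coeff_somT hi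
  have hval : ∀ x ∈ U, vb (eval (fun k => tang (x k)) h₂) = ((Lf h₁ i x : ℝ) : WithBot ℝ) := by
    intro x hx
    rw [← heq (fun k => tang (x k)), eval_strict hi hx c hc, vb_somT]
  have hle : ∀ d ∈ h₂.support, ∀ x ∈ U, Lf h₂ d x ≤ Lf h₁ i x := by
    intro d hd x hx
    have h2 : ((Lf h₂ d x : ℝ) : WithBot ℝ) ≤ ((Lf h₁ i x : ℝ) : WithBot ℝ) := by
      rw [← hval x hx, vb_eval_tang]
      exact Finset.le_sup (f := fun d => ((Lf h₂ d x : ℝ) : WithBot ℝ)) hd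
    exact_mod_cast h2
  -- affine identification on the ball
  have hkey : ∀ d ∈ h₂.support, Lf h₂ d x₀ = Lf h₁ i x₀ →
      d = i ∧ (h₂.coeff d).elim 0 Prod.fst = (h₁.coeff i).elim 0 Prod.fst := by
    intro d hd hdeq
    have hballU : Metric.ball x₀ ε ⊆ U := hball
    have hcoord : ∀ k : Fin n, (d k : ℝ) = (i k : ℝ) := by
      intro k
      have hpt : ∀ δ : ℝ, |δ| < ε →
          Lf h₂ d x₀ + δ * (d k : ℝ) ≤ Lf h₁ i x₀ + δ * (i k : ℝ) := by
        intro δ hδ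
        have hmem : (fun m => x₀ m + δ * (if m = k then (1:ℝ) else 0)) ∈ Metric.ball x₀ ε := by
          rw [Metric.mem_ball, dist_pi_lt_iff hε]
          intro m
          rw [Real.dist_eq]
          by_cases hmk : m = k
          · simp [hmk, abs_of_nonneg, hδ]
          · simpa [hmk] using hε
        have h3 := hle d hd _ (hballU hmem)
        rw [Lf_perturb, Lf_perturb] at h3
        have hsum : ∀ e : Fin n →₀ ℕ,
            (∑ m, (e m : ℝ) * (if m = k then (1:ℝ) else 0)) = (e k : ℝ) := by
          intro e
          rw [Finset.sum_eq_single k]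
          · simp
          · intro m _ hmk
            simp [hmk]
          · intro hk
            exact absurd (Finset.mem_univ k) hk
        rw [hsum, hsum] at h3
        exact h3
      have h1 := hpt (ε/2) (by rw [abs_of_pos (by linarith)]; linarith)
      have h2 := hpt (-(ε/2)) (by rw [abs_of_neg (by linarith)]; linarith)
      nlinarith
    have hdi : d = i := by
      ext k
      exact_mod_cast hcoord k
    refine ⟨hdi, ?_⟩
    have h5 : Lf h₂ d x₀ = Lf h₁ i x₀ := hdeq
    rw [Lf, Lf] at h5
    have h6 : (∑ m, (d m : ℝ) * x₀ m) = ∑ m, (i m : ℝ) * x₀ m := by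
      apply Finset.sum_congr rfl
      intro m _
      rw [hcoord m]
    rw [h6] at h5
    rw [hdi] at h5
    rw [hdi]
    linarith [h5]
  -- some monomial of h₂ achieves the value at x₀
  obtain ⟨d₀, hd₀, hd₀eq⟩ : ∃ d ∈ h₂.support, Lf h₂ d x₀ = Lf h₁ i x₀ := by
    have h0 := hval x₀ hx₀
    rw [vb_eval_tang] at h0
    have hne : h₂.support.Nonempty := by
      rw [Finset.nonempty_iff_ne_empty]
      intro hemp
      rw [hemp, Finset.sup_empty] at h0
      exact absurd h0 (by simp)
    obtain ⟨d, hd, hds⟩ :=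
      Finset.exists_mem_eq_sup h₂.support hne (fun d => ((Lf h₂ d x₀ : ℝ) : WithBot ℝ))
    refine ⟨d, hd, ?_⟩
    rw [hds] at h0
    exact_mod_cast h0
  have hi₂ : i ∈ h₂.support := by
    have h7 := hd₀
    rw [(hkey d₀ hd₀ hd₀eq).1] at h7
    exact h7
  have hLf₂ : Lf h₂ i x₀ = Lf h₁ i x₀ := by
    obtain ⟨hdi, _⟩ := hkey d₀ hd₀ hd₀eq
    have h8 : Lf h₂ i x₀ = Lf h₂ d₀ x₀ := by rw [hdi]
    rw [h8]
    exact hd₀eq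
  have hstrict₂ : ∀ d ∈ h₂.support, d ≠ i → Lf h₂ d x₀ < Lf h₂ i x₀ := by
    intro d hd hdi
    rw [hLf₂]
    rcases lt_or_eq_of_le (hle d hd x₀ hx₀) with h | h
    · exact h
    · exact absurd (hkey d hd h).1 hdi
  obtain ⟨c₂, hc₂⟩ := coeff_somT hi₂
  have he₂ := eval_strict hi₂ hstrict₂ c₂ hc₂
  have he₁ := eval_strict hi hx₀ c hc
  rw [← heq (fun k => tang (x₀ k)), he₁] at he₂
  have hpair : (Lf h₁ i x₀, c.2) = (Lf h₂ i x₀, c₂.2) := Option.some_injective _ he₂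
  have hflag : c.2 = c₂.2 := (Prod.ext_iff.1 hpair).2
  have hval₁ : c₂.1 = c.1 := by
    obtain ⟨hdi, h4⟩ := hkey d₀ hd₀ hd₀eq
    rw [hdi, hc₂, hc] at h4
    simpa [somT] using h4
  rw [hc₂, hc]
  rw [show c₂ = c from Prod.ext hval₁ hflag.symm]

end T
/-- two polynomials are equivalent iff they have the same essential part. -/
theorem tropical_equiv_iff_essentialPart_eq (n : ℕ) (f g : MvPolynomial (Fin n) T) :
    (∀ a : Fin n → T, MvPolynomial.eval a f = MvPolynomial.eval a g)
      ↔ T.essentialPart f = T.essentialPart g := by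
  classical
  obtain ⟨kf1, kf2⟩ := T.equiv_essentialPart f
  obtain ⟨kg1, kg2⟩ := T.equiv_essentialPart g
  constructor
  · intro h
    have h12 : ∀ a : Fin n → T,
        MvPolynomial.eval a (T.essentialPart f) = MvPolynomial.eval a (T.essentialPart g) :=
      fun a => by rw [← kf1 a, h a, kg1 a]
    apply MvPolynomial.ext
    intro d
    by_cases hd₁ : d ∈ (T.essentialPart f).support
    · exact (T.coeff_eq_of_equiv h12 (kf2 d hd₁)).symm
    · by_cases hd₂ : d ∈ (T.essentialPart g).support
      · exact T.coeff_eq_of_equiv (fun a => (h12 a).symm) (kg2 d hd₂)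
      · rw [MvPolynomial.notMem_support_iff.1 hd₁, MvPolynomial.notMem_support_iff.1 hd₂]
  · intro h a
    rw [kf1 a, h, ← kg1 a]
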